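/- Let D' be a disk of radius r' ≥ 1 whose center c' lies on the perpendicular bisector of the points B = (1/2, 1/(2√3)) and C = (-1/2, 1/(2√3)) (i.e., on the y-axis), with c' outside the closed disk of radius 1/√3 centered at the origin. If D' contains neither B nor C nor A = (0, -1/√3), and D' intersects the circle Q of radius r_q centered at the origin, then r_q ≥ 2/√3 - 1. (It suffices to prove: if dist(c', B) > r', dist(c', A) > r', |c'| > 1/√3, and dist from c' to Q is at most r', then r_q ≥ 2/√3 - 1.) -/

import Mathlib

noncomputable def pt (x y : ℝ) : EuclideanSpace ℝ (Fin 2) := WithLp.toLp 2 ![x, y]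

set_option maxHeartbeats 1600000 in
theorem stmt_3 (c' : EuclideanSpace ℝ (Fin 2)) (r' r_q : ℝ)
    (hr' : 1 ≤ r')
    (haxis : c' 0 = 0)
    (hB : dist c' (pt (1 / 2) (1 / (2 * Real.sqrt 3))) > r')
    (hA : dist c' (pt 0 (-(1 / Real.sqrt 3))) > r')
    (hout : dist c' (pt 0 0) > 1 / Real.sqrt 3)
    (hQ : dist c' (pt 0 0) ≤ r' + r_q) :
    r_q ≥ 2 / Real.sqrt 3 - 1 := by
  have s3 : Real.sqrt 3 ^ 2 = 3 := Real.sq_sqrt (by norm_num)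
  have s3pos : (0:ℝ) < Real.sqrt 3 := Real.sqrt_pos.mpr (by norm_num)
  have hs1 : (1:ℝ) ≤ Real.sqrt 3 := by nlinarith
  have hs2 : Real.sqrt 3 < 2 := by nlinarith
  set y := c' 1 with hy
  have dist_eq : ∀ a b : ℝ, dist c' (pt a b) =
      Real.sqrt ((0 - a)^2 + (y - b)^2) := by
    intro a b
    rw [EuclideanSpace.dist_eq, Fin.sum_univ_two]
    simp [pt, haxis, hy, Real.dist_eq]
  have hO : dist c' (pt 0 0) = |y| := by
    rw [dist_eq]
    simp [Real.sqrt_sq_eq_abs]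
  have hA' : r' < |y + 1 / Real.sqrt 3| := by
    have := hA
    rw [dist_eq] at this
    simpa [Real.sqrt_sq_eq_abs, sub_neg_eq_add] using this
  have hout' : 1 / Real.sqrt 3 < |y| := by rwa [hO] at hout
  have hQ' : |y| ≤ r' + r_q := by rwa [hO] at hQ
  have e2 : 2 / Real.sqrt 3 = 2 * Real.sqrt 3 / 3 := by
    rw [div_eq_div_iff s3pos.ne' (by norm_num)]; nlinarith
  have e1 : 1 / Real.sqrt 3 = Real.sqrt 3 / 3 := by
    rw [div_eq_div_iff s3pos.ne' (by norm_num)]; nlinarith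
  rcases le_or_gt y 0 with hneg | hpos
  · have hya : |y| = -y := abs_of_nonpos hneg
    have h1 : 1 / Real.sqrt 3 < -y := by rwa [hya] at hout'
    have h2 : |y + 1 / Real.sqrt 3| = -(y + 1 / Real.sqrt 3) := by
      apply abs_of_nonpos; linarith
    rw [h2] at hA'
    have h3 : -y ≤ r' + r_q := by rwa [hya] at hQ'
    have hrq : 1 / Real.sqrt 3 < r_q := by linarith
    rw [e1] at hrq
    rw [e2]
    linarith
  · have hya : |y| = y := abs_of_pos hpos
    have hy3 : 1 / Real.sqrt 3 < y := by rwa [hya] at hout'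
    have hB' : r' < Real.sqrt ((0 - 1/2)^2 + (y - 1 / (2 * Real.sqrt 3))^2) := by
      rw [dist_eq] at hB; exact hB
    clear hB hA hQ hout hO dist_eq
    clear_value y
    set t : ℝ := y - 1 / (2 * Real.sqrt 3) with ht
    have e3 : 1 / (2 * Real.sqrt 3) = Real.sqrt 3 / 6 := by
      rw [div_eq_div_iff (by positivity) (by norm_num : (6:ℝ) ≠ 0)]; nlinarith
    have hyt : y = t + Real.sqrt 3 / 6 := by rw [ht, e3]; ring
    clear_value t
    clear ht
    have hQ2 : y ≤ r' + r_q := by rwa [hya] at hQ'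
    rw [e1] at hy3
    clear hA' hout' hQ' hy haxis hya hpos
    have ht0 : 0 < t := by linarith
    have hrpos : (0:ℝ) < r' := by linarith
    have hBs : r' ^ 2 < 1/4 + t ^ 2 := by
      have hnn : (0:ℝ) ≤ (0 - 1/2)^2 + t^2 := by positivity
      have h := Real.sq_sqrt hnn
      nlinarith [hB', Real.sqrt_nonneg ((0 - 1/2)^2 + t^2)]
    have h34 : (3:ℝ)/4 < t ^ 2 := by nlinarith
    have htpos : Real.sqrt 3 / 2 < t := by
      by_contra hc
      push_neg at hc
      have p1 : t * t ≤ (Real.sqrt 3 / 2) * (Real.sqrt 3 / 2) :=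
        mul_le_mul hc hc ht0.le (by positivity)
      nlinarith
    have upos : (0:ℝ) < t + 1 - Real.sqrt 3 / 2 := by linarith
    have hu2 : 1/4 + t^2 ≤ (t + 1 - Real.sqrt 3 / 2)^2 := by
      have prod : 0 ≤ (t - Real.sqrt 3 / 2) * (2 - Real.sqrt 3) :=
        mul_nonneg (by linarith) (by linarith)
      nlinarith
    have key : r' < t + 1 - Real.sqrt 3 / 2 := by
      by_contra hc
      push_neg at hc
      have p1 : (t + 1 - Real.sqrt 3 / 2) * (t + 1 - Real.sqrt 3 / 2) ≤ r' * r' :=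
        mul_le_mul hc hc upos.le hrpos.le
      have q1 : (t + 1 - Real.sqrt 3 / 2) * (t + 1 - Real.sqrt 3 / 2)
          = (t + 1 - Real.sqrt 3 / 2)^2 := by ring
      have q2 : r' * r' = r'^2 := by ring
      linarith
    rw [e2]
    linarith
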